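/- If M = M(N) satisfies M/N² → 0 as N → ∞, then the total area S̄(N,M) = 4NM·Ā_pqr of the Schwarz lantern converges to the cylinder area 2π as N → ∞. -/

import Mathlib

open Real Filter Asymptotics

/-- Squared Euclidean distance between two points of `ℝ³`. -/
noncomputable def distSq (a b : Fin 3 → ℝ) : ℝ :=
  (a 0 - b 0) ^ 2 + (a 1 - b 1) ^ 2 + (a 2 - b 2) ^ 2

/-- Euclidean inner product on `ℝ³`. -/
noncomputable def inner3 (a b : Fin 3 → ℝ) : ℝ :=
  a 0 * b 0 + a 1 * b 1 + a 2 * b 2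

/-- Euclidean area of the triangle with vertices `a b c` in `ℝ³`
(half the norm of the cross product of two edge vectors). -/
noncomputable def triArea (a b c : Fin 3 → ℝ) : ℝ :=
  (1 / 2) * Real.sqrt
    (((b 1 - a 1) * (c 2 - a 2) - (b 2 - a 2) * (c 1 - a 1)) ^ 2 +
     ((b 2 - a 2) * (c 0 - a 0) - (b 0 - a 0) * (c 2 - a 2)) ^ 2 +
     ((b 0 - a 0) * (c 1 - a 1) - (b 1 - a 1) * (c 0 - a 0)) ^ 2)

/-- Vertex `p = (1,0,0)` of a typical Schwarz-lantern triangle. -/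
noncomputable def vecP : Fin 3 → ℝ := ![1, 0, 0]

/-- Vertex `q = (cos(π/N), sin(π/N), 1/(2M))` of a typical Schwarz-lantern triangle. -/
noncomputable def vecQ (N M : ℝ) : Fin 3 → ℝ := ![Real.cos (π / N), Real.sin (π / N), 1 / (2 * M)]

/-- Vertex `r = (cos(2π/N), sin(2π/N), 0)` of a typical Schwarz-lantern triangle. -/
noncomputable def vecR (N : ℝ) : Fin 3 → ℝ := ![Real.cos (2 * π / N), Real.sin (2 * π / N), 0]

/-- Outward unit normal of the unit cylinder `x² + y² = 1` at a point `(x,y,z)`. -/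
noncomputable def cylNormal (v : Fin 3 → ℝ) : Fin 3 → ℝ := ![v 0, v 1, 0]

lemma sqrt_arg_eq (s c m : ℝ) (h1 : s ^ 2 + c ^ 2 = 1) (hm : m ≠ 0) :
    ((s - 0) * (0 - 0) - (1 / (2 * m) - 0) * (2 * s * c - 0)) ^ 2 +
      ((1 / (2 * m) - 0) * (2 * c ^ 2 - 1 - 1) - (c - 1) * (0 - 0)) ^ 2 +
      ((c - 1) * (2 * s * c - 0) - (s - 0) * (2 * c ^ 2 - 1 - 1)) ^ 2
      = (s / m) ^ 2 * (1 + (2 * m * (1 - c)) ^ 2) := by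
  have h2 : m ^ 2 ≠ 0 := pow_ne_zero _ hm
  field_simp
  ring_nf
  nlinarith [h1, sq_nonneg s, sq_nonneg c, sq_nonneg m, sq_nonneg (s*m), sq_nonneg (c*m)]

lemma area_formula (N M : ℝ) (hN : 1 ≤ N) (hM : 0 < M) :
    4 * N * M * triArea vecP (vecQ N M) (vecR N)
      = 2 * N * Real.sin (π / N) *
        Real.sqrt (1 + (2 * M * (1 - Real.cos (π / N))) ^ 2) := by
  have hN0 : 0 < N := lt_of_lt_of_le one_pos hN
  have ht0 : 0 ≤ π / N := div_nonneg pi_pos.le hN0.le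
  have ht : π / N ≤ π := by
    rw [div_le_iff₀ hN0]; nlinarith [pi_pos]
  have hs : 0 ≤ Real.sin (π / N) := sin_nonneg_of_nonneg_of_le_pi ht0 ht
  have h2t : 2 * π / N = 2 * (π / N) := by ring
  unfold triArea vecP vecQ vecR
  simp only [Matrix.cons_val_zero, Matrix.cons_val_one, Matrix.head_cons,
    Matrix.cons_val_two, Matrix.tail_cons, h2t]
  rw [Real.cos_two_mul, Real.sin_two_mul,
    sqrt_arg_eq _ _ _ (sin_sq_add_cos_sq (π / N)) hM.ne',
    Real.sqrt_mul (sq_nonneg _), Real.sqrt_sq (div_nonneg hs hM.le)]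
  field_simp
  ring

lemma nat_mul_sin_tendsto :
    Filter.Tendsto (fun N : ℕ => (N : ℝ) * Real.sin (π / N)) Filter.atTop (nhds π) := by
  have hslope : Filter.Tendsto (fun x : ℝ => Real.sin x / x) (nhdsWithin 0 {(0:ℝ)}ᶜ) (nhds 1) := by
    have := hasDerivAt_iff_tendsto_slope.mp (Real.hasDerivAt_sin 0)
    rw [Real.cos_zero] at this
    refine this.congr (fun y => ?_)
    simp [slope_fun_def_field]
  have hπN : Filter.Tendsto (fun N : ℕ => π / (N : ℝ)) Filter.atTop (nhdsWithin 0 {(0:ℝ)}ᶜ) := by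
    apply tendsto_nhdsWithin_of_tendsto_nhds_of_eventually_within
    · exact tendsto_const_div_atTop_nhds_zero_nat π
    · filter_upwards [Filter.eventually_ge_atTop 1] with N hN
      have : (0:ℝ) < (N:ℝ) := by exact_mod_cast Nat.lt_of_lt_of_le Nat.zero_lt_one hN
      exact Set.mem_compl_singleton_iff.mpr (by positivity)
  have hcomp := hslope.comp hπN
  have := hcomp.const_mul π
  simp only [mul_one] at this
  refine this.congr' ?_
  filter_upwards [Filter.eventually_ge_atTop 1] with N hN
  have hNpos : (0:ℝ) < (N:ℝ) := by exact_mod_cast Nat.lt_of_lt_of_le Nat.zero_lt_one hN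
  have hπ : π ≠ 0 := pi_ne_zero
  simp only [Function.comp_apply]
  field_simp [Function.comp]

/-- if `M(N)/N² → 0` as `N → ∞`, then the total Schwarz lantern area
`S̄(N, M(N)) = 4·N·M(N)·Ā_pqr` converges to the cylinder area `2π`. -/
theorem schwarz_area_converges (M : ℕ → ℕ) (hMpos : ∀ N, 0 < M N)
    (h : Filter.Tendsto (fun N : ℕ => (M N : ℝ) / (N : ℝ) ^ 2) Filter.atTop (nhds 0)) :
    Filter.Tendsto
      (fun N : ℕ => 4 * (N : ℝ) * (M N : ℝ) * triArea vecP (vecQ N (M N)) (vecR N))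
      Filter.atTop (nhds (2 * π)) := by

  have h2 : Filter.Tendsto (fun N : ℕ => 2 * (M N : ℝ) * (1 - Real.cos (π / N)))
      Filter.atTop (nhds 0) := by
    have hub : Filter.Tendsto (fun N : ℕ => π ^ 2 * ((M N : ℝ) / (N : ℝ) ^ 2))
        Filter.atTop (nhds 0) := by
      simpa using h.const_mul (π ^ 2)
    refine tendsto_of_tendsto_of_tendsto_of_le_of_le tendsto_const_nhds hub ?_ ?_
    · intro N
      have := Real.cos_le_one (π / N)
      have hM0 : (0:ℝ) ≤ (M N : ℝ) := Nat.cast_nonneg _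
      nlinarith
    · intro N
      have hcos := Real.one_sub_sq_div_two_le_cos (x := π / (N:ℝ))
      have hM0 : (0:ℝ) ≤ (M N : ℝ) := Nat.cast_nonneg _
      have heq : π ^ 2 * ((M N : ℝ) / (N : ℝ) ^ 2) = 2 * (M N : ℝ) * ((π / N) ^ 2 / 2) := by
        rw [div_pow]; ring
      dsimp only
      rw [heq]
      nlinarith
  have hsqrt : Filter.Tendsto
      (fun N : ℕ => Real.sqrt (1 + (2 * (M N : ℝ) * (1 - Real.cos (π / N))) ^ 2))
      Filter.atTop (nhds 1) := by
    have : Filter.Tendsto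
        (fun N : ℕ => 1 + (2 * (M N : ℝ) * (1 - Real.cos (π / N))) ^ 2)
        Filter.atTop (nhds (1 + 0 ^ 2)) := tendsto_const_nhds.add (h2.pow 2)
    simpa using this.sqrt
  have hmain := ((nat_mul_sin_tendsto.const_mul 2).mul hsqrt)
  simp only [mul_one] at hmain
  refine hmain.congr' ?_
  filter_upwards [Filter.eventually_ge_atTop 1] with N hN
  have hN1 : (1:ℝ) ≤ (N:ℝ) := by exact_mod_cast hN
  have hM : (0:ℝ) < (M N : ℝ) := by exact_mod_cast hMpos N
  rw [area_formula _ _ hN1 hM]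
  ring
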